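/- arXiv:1110.3005 — 2 statements merged into one kernel-verified Lean document; each statement's English description precedes it below -/
import Mathlib

section
/- For an irrational x₀ ∈ (0,1) with continued fraction digits aₙ and approximation coefficients θₙ, for all n ≥ 1: aₙ₊₁ = ⌊(1 + √(1 − 4θₙ₋₁θₙ))/(2θₙ)⌋. -/
noncomputable section

open Real

/-- The Gauss map `T x = 1/x - ⌊1/x⌋`. -/
def gauss (x : ℝ) : ℝ := 1 / x - ⌊1 / x⌋

/-- The future of `x₀` at time `n`: `xₙ = Tⁿ x₀`. -/
def fut (x₀ : ℝ) (n : ℕ) : ℝ := gauss^[n] x₀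

/-- The `n`-th partial quotient (digit) of `x₀` (meaningful for `n ≥ 1`):
`aₙ = ⌊1/xₙ₋₁⌋`. -/
def digit (x₀ : ℝ) (n : ℕ) : ℤ := ⌊1 / fut x₀ (n - 1)⌋

/-- Numerators of the continued fraction convergents of `x₀ ∈ (0,1)`. -/
def num (x₀ : ℝ) : ℕ → ℤ
  | 0 => 0
  | 1 => 1
  | (n + 2) => digit x₀ (n + 2) * num x₀ (n + 1) + num x₀ n

/-- Denominators of the continued fraction convergents of `x₀ ∈ (0,1)`. -/
def den (x₀ : ℝ) : ℕ → ℤ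
  | 0 => 1
  | 1 => digit x₀ 1
  | (n + 2) => digit x₀ (n + 2) * den x₀ (n + 1) + den x₀ n

/-- The `n`-th approximation coefficient `θₙ = qₙ² |x₀ - pₙ/qₙ|`. -/
def theta (x₀ : ℝ) (n : ℕ) : ℝ :=
  (den x₀ n : ℝ) ^ 2 * |x₀ - (num x₀ n : ℝ) / (den x₀ n : ℝ)|

/-- Finite continued fraction `[b₁,...,bₖ] = 1/(b₁ + 1/(⋯ + 1/bₖ))`, with `[∅] = 0`. -/
def fcf : List ℝ → ℝ
  | [] => 0
  | (b :: bs) => 1 / (b + fcf bs)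

/-- The past of `x₀` at time `n ≥ 1`: `yₙ = -aₙ - [aₙ₋₁, aₙ₋₂, ..., a₁]`. -/
def past (x₀ : ℝ) (n : ℕ) : ℝ :=
  -(digit x₀ n : ℝ) -
    fcf (((List.range (n - 1)).map fun i => ((digit x₀ (n - 1 - i) : ℤ) : ℝ)))

/-- The domain `Ω = (0,1) × (-∞,-1)`. -/
def Omega : Set (ℝ × ℝ) := Set.Ioo (0 : ℝ) 1 ×ˢ Set.Iio (-1 : ℝ)

/-- The open triangle `Γ` with vertices `(0,0)`, `(1,0)`, `(0,1)`. -/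
def Gam : Set (ℝ × ℝ) := {p | 0 < p.1 ∧ 0 < p.2 ∧ p.1 + p.2 < 1}

/-- The map `Ψ(x,y) = (1/(x-y), -xy/(x-y))`. -/
def Psi (p : ℝ × ℝ) : ℝ × ℝ := (1 / (p.1 - p.2), -(p.1 * p.2) / (p.1 - p.2))

/-- The map `Φ(u,v) = ((1-√(1-4uv))/(2u), -(1+√(1-4uv))/(2u))`. -/
def Phi (p : ℝ × ℝ) : ℝ × ℝ :=
  ((1 - Real.sqrt (1 - 4 * p.1 * p.2)) / (2 * p.1),
   -((1 + Real.sqrt (1 - 4 * p.1 * p.2)) / (2 * p.1)))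

/-- The natural extension map `𝒯(x,y) = (1/x - ⌊1/x⌋, 1/y - ⌊1/x⌋)`. -/
def natExt (p : ℝ × ℝ) : ℝ × ℝ := (1 / p.1 - ⌊1 / p.1⌋, 1 / p.2 - ⌊1 / p.1⌋)

lemma gauss_eq_fract (x : ℝ) : gauss x = Int.fract (1/x) := rfl

lemma gauss_step {x : ℝ} (hx : x ∈ Set.Ioo (0:ℝ) 1) (hirr : Irrational x) :
    gauss x ∈ Set.Ioo (0:ℝ) 1 ∧ Irrational (gauss x) := by
  have hinv : Irrational (1/x) := by
    simpa [one_div] using hirr.inv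
  refine ⟨⟨?_, ?_⟩, ?_⟩
  · rw [gauss_eq_fract, Int.fract_pos]
    intro h
    exact hinv.ne_int ⌊1/x⌋ h
  · rw [gauss_eq_fract]; exact Int.fract_lt_one _
  · exact hinv.sub_intCast _

lemma fut_mem (x₀ : ℝ) (hx : x₀ ∈ Set.Ioo (0:ℝ) 1) (hirr : Irrational x₀) (n : ℕ) :
    fut x₀ n ∈ Set.Ioo (0:ℝ) 1 ∧ Irrational (fut x₀ n) := by
  induction n with
  | zero => exact ⟨hx, hirr⟩
  | succ n ih =>
    have : fut x₀ (n+1) = gauss (fut x₀ n) := by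
      simp [fut, Function.iterate_succ_apply']
    rw [this]
    exact gauss_step ih.1 ih.2

lemma digit_pos (x₀ : ℝ) (hx : x₀ ∈ Set.Ioo (0:ℝ) 1) (hirr : Irrational x₀) (n : ℕ) :
    1 ≤ digit x₀ n := by
  have h := fut_mem x₀ hx hirr (n-1)
  have h1 : (1:ℝ) ≤ 1 / fut x₀ (n-1) := by
    rw [le_div_iff₀ h.1.1]; linarith [h.1.2]
  exact_mod_cast Int.le_floor.2 (by exact_mod_cast h1)

lemma fut_succ (x₀ : ℝ) (n : ℕ) :
    fut x₀ (n+1) = 1 / fut x₀ n - digit x₀ (n+1) := by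
  simp [fut, Function.iterate_succ_apply', gauss, digit]

lemma den_pair (x₀ : ℝ) (hx : x₀ ∈ Set.Ioo (0:ℝ) 1) (hirr : Irrational x₀) (n : ℕ) :
    1 ≤ den x₀ n ∧ den x₀ n ≤ den x₀ (n+1) := by
  induction n with
  | zero =>
    refine ⟨le_refl _, ?_⟩
    show (1:ℤ) ≤ digit x₀ 1
    exact digit_pos x₀ hx hirr 1
  | succ n ih =>
    have h1 : 1 ≤ den x₀ (n+1) := le_trans ih.1 ih.2
    refine ⟨h1, ?_⟩
    show den x₀ (n+1) ≤ digit x₀ (n+2) * den x₀ (n+1) + den x₀ n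
    have ha := digit_pos x₀ hx hirr (n+2)
    nlinarith [ih.1]

lemma key_identity (x₀ : ℝ) (hx : x₀ ∈ Set.Ioo (0:ℝ) 1) (hirr : Irrational x₀) (n : ℕ) :
    x₀ * ((den x₀ (n+1) : ℝ) + (den x₀ n : ℝ) * fut x₀ (n+1)) =
      (num x₀ (n+1) : ℝ) + (num x₀ n : ℝ) * fut x₀ (n+1) := by
  induction n with
  | zero =>
    have h1 : fut x₀ 1 = 1 / x₀ - digit x₀ 1 := by
      simpa [show fut x₀ 0 = x₀ from rfl] using fut_succ x₀ 0
    have hx0 : x₀ ≠ 0 := ne_of_gt hx.1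
    show x₀ * ((den x₀ 1 : ℝ) + (den x₀ 0 : ℝ) * fut x₀ 1) =
      (num x₀ 1 : ℝ) + (num x₀ 0 : ℝ) * fut x₀ 1
    simp only [den, num]
    rw [h1]; push_cast; field_simp; ring
  | succ n ih =>
    have hpos := (fut_mem x₀ hx hirr (n+1)).1.1
    have hpos' : fut x₀ (n+1) ≠ 0 := ne_of_gt hpos
    show x₀ * ((den x₀ (n+2) : ℝ) + (den x₀ (n+1) : ℝ) * fut x₀ (n+2)) =
      (num x₀ (n+2) : ℝ) + (num x₀ (n+1) : ℝ) * fut x₀ (n+2)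
    have hx' : fut x₀ (n+2) = 1 / fut x₀ (n+1) - digit x₀ (n+2) := fut_succ x₀ (n+1)
    have h1 : fut x₀ (n+1) * ((digit x₀ (n+2) : ℝ) + fut x₀ (n+2)) = 1 := by
      rw [hx']; field_simp; ring
    have hden : (den x₀ (n+2) : ℝ) = (digit x₀ (n+2) : ℝ) * den x₀ (n+1) + den x₀ n := by
      simp only [den]; push_cast; ring
    have hnum : (num x₀ (n+2) : ℝ) = (digit x₀ (n+2) : ℝ) * num x₀ (n+1) + num x₀ n := by
      simp only [num]; push_cast; ring
    rw [hden, hnum]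
    linear_combination ((digit x₀ (n+2) : ℝ) + fut x₀ (n+2)) * ih +
      (-(x₀ * (den x₀ n : ℝ)) + (num x₀ n : ℝ)) * h1

lemma det_identity (x₀ : ℝ) (n : ℕ) :
    num x₀ (n+1) * den x₀ n - num x₀ n * den x₀ (n+1) = (-1)^n := by
  induction n with
  | zero => simp [num, den]
  | succ n ih =>
    show (digit x₀ (n+2) * num x₀ (n+1) + num x₀ n) * den x₀ (n+1) -
        num x₀ (n+1) * (digit x₀ (n+2) * den x₀ (n+1) + den x₀ n) = (-1)^(n+1)
    linear_combination (-1 : ℤ) * ih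

theorem stmt14 (x₀ : ℝ) (hx : x₀ ∈ Set.Ioo (0:ℝ) 1) (hirr : Irrational x₀)
    (n : ℕ) (hn : 1 ≤ n) :
    digit x₀ (n + 1) =
      ⌊(1 + Real.sqrt (1 - 4 * theta x₀ (n - 1) * theta x₀ n)) / (2 * theta x₀ n)⌋ := by
  obtain ⟨m, rfl⟩ : ∃ m, n = m + 1 := ⟨n - 1, (Nat.succ_pred_eq_of_pos hn).symm⟩
  simp only [Nat.add_sub_cancel]
  have hxm := fut_mem x₀ hx hirr (m+1)
  set x : ℝ := fut x₀ (m+1) with hxdef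
  have hx0 : 0 < x := hxm.1.1
  have hx1 : x < 1 := hxm.1.2
  set A : ℝ := (den x₀ (m+1) : ℝ) with hAdef
  set B : ℝ := (den x₀ m : ℝ) with hBdef
  set P : ℝ := (num x₀ (m+1) : ℝ) with hPdef
  set Q : ℝ := (num x₀ m : ℝ) with hQdef
  have hpair := den_pair x₀ hx hirr m
  have hB1 : (1:ℝ) ≤ B := by rw [hBdef]; exact_mod_cast hpair.1
  have hBA : B ≤ A := by rw [hBdef, hAdef]; exact_mod_cast hpair.2
  have hA1 : (1:ℝ) ≤ A := le_trans hB1 hBA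
  have hA0 : A ≠ 0 := by linarith
  have hB0 : B ≠ 0 := by linarith
  set D : ℝ := A + B * x with hDdef
  have hD : 0 < D := by nlinarith
  have hD0 : D ≠ 0 := ne_of_gt hD
  have hkey : x₀ * D = P + Q * x := key_identity x₀ hx hirr m
  have hdet : P * B - Q * A = (-1:ℝ)^m := by
    have := det_identity x₀ m
    rw [hPdef, hBdef, hQdef, hAdef]
    push_cast
    exact_mod_cast congrArg (Int.cast : ℤ → ℝ) this
  -- x₀*A - P
  have h1 : (x₀ * A - P) * D = -(-1)^m * x := by
    linear_combination A * hkey - x * hdet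
  have h1' : x₀ * A - P = -(-1)^m * x / D := by
    field_simp at h1 ⊢; linarith [h1]
  have h2 : (x₀ * B - Q) * D = (-1)^m := by
    linear_combination B * hkey + hdet
  have h2' : x₀ * B - Q = (-1)^m / D := by
    field_simp at h2 ⊢; linarith [h2]
  have habs1 : |x₀ - P / A| = x / (A * D) := by
    have : x₀ - P / A = (x₀ * A - P) / A := by field_simp
    rw [this, h1', div_div, abs_div, abs_mul, abs_neg, abs_pow, abs_neg, abs_one, one_pow,
      one_mul, abs_of_pos hx0, abs_of_pos (by nlinarith : (0:ℝ) < D * A)]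
    ring
  have habs2 : |x₀ - Q / B| = 1 / (B * D) := by
    have : x₀ - Q / B = (x₀ * B - Q) / B := by field_simp
    rw [this, h2', div_div, abs_div, abs_pow, abs_neg, abs_one, one_pow,
      abs_of_pos (by nlinarith : (0:ℝ) < D * B)]
    ring
  have ht1 : theta x₀ (m+1) = A * x / D := by
    rw [theta, ← hAdef, ← hPdef, habs1]
    field_simp
  have ht0 : theta x₀ m = B / D := by
    rw [theta, ← hBdef, ← hQdef, habs2]
    field_simp
  rw [ht1, ht0]
  have hsq : 1 - 4 * (B / D) * (A * x / D) = ((A - B * x) / D)^2 := by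
    field_simp; ring
  have hABx : 0 ≤ (A - B * x) / D := by
    apply div_nonneg _ (le_of_lt hD)
    nlinarith
  rw [hsq, Real.sqrt_sq hABx]
  have hfin : (1 + (A - B * x) / D) / (2 * (A * x / D)) = 1 / x := by
    rw [hDdef]
    field_simp
    ring
  rw [hfin]
  rfl
end
end

section
/- For an irrational x₀ ∈ (0,1), for all n ≥ 1 the Dajani–Kraaikamp identity holds: θₙ₊₁ = θₙ₋₁ + aₙ₊₁√(1 − 4θₙ₋₁θₙ) − aₙ₊₁²θₙ, where aₙ₊₁ is the (n+1)-th continued fraction digit. -/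
noncomputable section

open Real

open Finset

variable {x₀ : ℝ}

lemma fut_good (hx : x₀ ∈ Set.Ioo (0:ℝ) 1) (hirr : Irrational x₀) (n : ℕ) :
    fut x₀ n ∈ Set.Ioo (0:ℝ) 1 ∧ Irrational (fut x₀ n) := by
  induction n with
  | zero => exact ⟨hx, hirr⟩
  | succ n ih =>
    obtain ⟨⟨h0, h1⟩, hir⟩ := ih
    have hfs : fut x₀ (n+1) = gauss (fut x₀ n) := Function.iterate_succ_apply' _ _ _
    have hinv : Irrational (1 / fut x₀ n) := by
      simpa [one_div] using hir.inv
    have hfr : gauss (fut x₀ n) = Int.fract (1 / fut x₀ n) := rfl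
    have hirr2 : Irrational (Int.fract (1 / fut x₀ n)) := by
      unfold Int.fract
      exact Irrational.sub_intCast hinv _
    refine ⟨?_, by rwa [hfs, hfr]⟩
    rw [hfs, hfr]
    constructor
    · rcases lt_or_eq_of_le (Int.fract_nonneg (1 / fut x₀ n)) with h | h
      · exact h
      · exact absurd h.symm (by exact_mod_cast hirr2.ne_int 0)
    · exact Int.fract_lt_one _

lemma digit_ge (hx : x₀ ∈ Set.Ioo (0:ℝ) 1) (hirr : Irrational x₀) (n : ℕ) :
    1 ≤ digit x₀ (n + 1) := by
  obtain ⟨⟨h0, h1⟩, _⟩ := fut_good hx hirr n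
  have h : (1:ℝ) ≤ 1 / fut x₀ n := by
    rw [le_div_iff₀ h0]; linarith
  rw [one_div] at h
  simpa [digit] using Int.le_floor.2 (by exact_mod_cast h)

lemma fut_rec (hx : x₀ ∈ Set.Ioo (0:ℝ) 1) (hirr : Irrational x₀) (n : ℕ) :
    fut x₀ (n + 1) = 1 / fut x₀ n - (digit x₀ (n + 1) : ℝ) := by
  have hfs : fut x₀ (n+1) = gauss (fut x₀ n) := Function.iterate_succ_apply' _ _ _
  simp [hfs, gauss, digit]

lemma den_pos (hx : x₀ ∈ Set.Ioo (0:ℝ) 1) (hirr : Irrational x₀) (n : ℕ) :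
    1 ≤ den x₀ n ∧ den x₀ n ≤ den x₀ (n + 1) := by
  induction n with
  | zero =>
    have := digit_ge hx hirr 0
    simp [den, this]
  | succ n ih =>
    have ha := digit_ge hx hirr (n + 1)
    constructor
    · linarith [ih.1, ih.2]
    · show den x₀ (n+1) ≤ digit x₀ (n+2) * den x₀ (n+1) + den x₀ n
      nlinarith [ih.1, ih.2]

lemma key_E (hx : x₀ ∈ Set.Ioo (0:ℝ) 1) (hirr : Irrational x₀) :
    ∀ n : ℕ, (den x₀ n : ℝ) * x₀ - num x₀ n =
      (-1) ^ n * ∏ i ∈ range (n + 1), fut x₀ i := by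
  have key : ∀ n : ℕ,
      ((den x₀ n : ℝ) * x₀ - num x₀ n = (-1) ^ n * ∏ i ∈ range (n + 1), fut x₀ i) ∧
      ((den x₀ (n+1) : ℝ) * x₀ - num x₀ (n+1) = (-1) ^ (n+1) * ∏ i ∈ range (n + 2), fut x₀ i) := by
    intro n
    induction n with
    | zero =>
      have h1 := fut_rec hx hirr 0
      have h0 : fut x₀ 0 = x₀ := rfl
      have hx0 : x₀ ≠ 0 := ne_of_gt hx.1
      constructor
      · simp [den, num, h0]
      · have : (digit x₀ 1 : ℝ) = 1 / x₀ - fut x₀ 1 := by rw [h1, h0]; ring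
        simp only [den, num, prod_range_succ, range_one, prod_singleton, h0]
        rw [this]
        field_simp
        push_cast; ring
    | succ n ih =>
      refine ⟨ih.2, ?_⟩
      have hrec := fut_rec hx hirr (n + 1)
      have hne : fut x₀ (n+1) ≠ 0 := ne_of_gt (fut_good hx hirr (n+1)).1.1
      have hts : fut x₀ (n+1) * fut x₀ (n+2) = 1 - (digit x₀ (n+2) : ℝ) * fut x₀ (n+1) := by
        rw [hrec]; field_simp
      show (↑(digit x₀ (n+2) * den x₀ (n+1) + den x₀ n) : ℝ) * x₀
          - ↑(digit x₀ (n+2) * num x₀ (n+1) + num x₀ n)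
          = (-1) ^ (n+2) * ∏ i ∈ range (n + 3), fut x₀ i
      push_cast
      rw [prod_range_succ, prod_range_succ]
      have h2 := ih.2
      rw [prod_range_succ] at h2
      have h1 := ih.1
      linear_combination (digit x₀ (n+2) : ℝ) * h2 + h1 -
        (-1)^n * (∏ i ∈ range (n + 1), fut x₀ i) * hts
  exact fun n => (key n).1

lemma key_D (hx : x₀ ∈ Set.Ioo (0:ℝ) 1) (hirr : Irrational x₀) :
    ∀ n : ℕ, (∏ i ∈ range (n + 1), fut x₀ i) *
      ((den x₀ (n + 1) : ℝ) + (den x₀ n : ℝ) * fut x₀ (n + 1)) = 1 := by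
  intro n
  induction n with
  | zero =>
    have h1 := fut_rec hx hirr 0
    have h0 : fut x₀ 0 = x₀ := rfl
    have hx0 : x₀ ≠ 0 := ne_of_gt hx.1
    simp only [den, range_one, prod_singleton, h0, h1]
    field_simp
    rw [zero_add, range_one, prod_singleton, h0]; push_cast; ring
  | succ n ih =>
    have hrec := fut_rec hx hirr (n + 1)
    have hne : fut x₀ (n+1) ≠ 0 := ne_of_gt (fut_good hx hirr (n+1)).1.1
    have hts : fut x₀ (n+1) * fut x₀ (n+2) = 1 - (digit x₀ (n+2) : ℝ) * fut x₀ (n+1) := by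
      rw [hrec]; field_simp
    show (∏ i ∈ range (n + 2), fut x₀ i) *
      ((↑(digit x₀ (n+2) * den x₀ (n+1) + den x₀ n) : ℝ) + (den x₀ (n+1) : ℝ) * fut x₀ (n+2)) = 1
    push_cast
    rw [prod_range_succ]
    linear_combination ih + (den x₀ (n+1) : ℝ) * (∏ i ∈ range (n + 1), fut x₀ i) * hts

lemma prod_pos' (hx : x₀ ∈ Set.Ioo (0:ℝ) 1) (hirr : Irrational x₀) (n : ℕ) :
    0 < ∏ i ∈ range (n + 1), fut x₀ i :=
  Finset.prod_pos fun i _ => (fut_good hx hirr i).1.1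

lemma theta_eq (hx : x₀ ∈ Set.Ioo (0:ℝ) 1) (hirr : Irrational x₀) (n : ℕ) :
    theta x₀ n = (den x₀ n : ℝ) * ∏ i ∈ range (n + 1), fut x₀ i := by
  have hq : (0:ℝ) < (den x₀ n : ℝ) := by exact_mod_cast lt_of_lt_of_le one_pos (den_pos hx hirr n).1
  have hP := prod_pos' hx hirr n
  have hE := key_E hx hirr n
  unfold theta
  rw [show x₀ - (num x₀ n : ℝ) / (den x₀ n : ℝ) = ((den x₀ n : ℝ) * x₀ - num x₀ n) / den x₀ n by
    field_simp]
  rw [hE, abs_div, abs_mul, abs_pow, abs_neg, abs_one, one_pow, one_mul,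
    abs_of_pos hP, abs_of_pos hq]
  field_simp


theorem stmt16 (x₀ : ℝ) (hx : x₀ ∈ Set.Ioo (0:ℝ) 1) (hirr : Irrational x₀)
    (n : ℕ) (hn : 1 ≤ n) :
    theta x₀ (n + 1) =
      theta x₀ (n - 1) +
        (digit x₀ (n + 1) : ℝ) * Real.sqrt (1 - 4 * theta x₀ (n - 1) * theta x₀ n) -
        (digit x₀ (n + 1) : ℝ) ^ 2 * theta x₀ n := by
  obtain ⟨m, rfl⟩ : ∃ m, n = m + 1 := ⟨n - 1, (Nat.succ_pred_eq_of_pos hn).symm⟩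
  simp only [Nat.add_sub_cancel]
  set p := ∏ i ∈ range (m + 1), fut x₀ i with hp_def
  set t := fut x₀ (m + 1) with ht_def
  set q := (den x₀ (m + 1) : ℝ) with hq_def
  set r := (den x₀ m : ℝ) with hr_def
  set a := (digit x₀ (m + 2) : ℝ) with ha_def
  set s := fut x₀ (m + 2) with hs_def
  have hp : 0 < p := prod_pos' hx hirr m
  have ht0 : 0 < t := (fut_good hx hirr (m+1)).1.1
  have ht1 : t < 1 := (fut_good hx hirr (m+1)).1.2
  have hr1 : (1:ℝ) ≤ r := by rw [hr_def]; exact_mod_cast (den_pos hx hirr m).1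
  have hrq : r ≤ q := by rw [hr_def, hq_def]; exact_mod_cast (den_pos hx hirr m).2
  have hD : p * (q + r * t) = 1 := key_D hx hirr m
  have hrec : fut x₀ (m + 2) = 1 / fut x₀ (m + 1) - (digit x₀ (m + 2) : ℝ) :=
    fut_rec hx hirr (m + 1)
  have hts : t * s = 1 - a * t := by
    rw [hs_def, hrec, ht_def, ha_def]; rw [mul_sub, one_div, mul_inv_cancel₀ (ht0.ne' : fut x₀ (m + 1) ≠ 0)]; ring
  have hq2 : (den x₀ (m + 2) : ℝ) = a * q + r := by
    show ((digit x₀ (m+2) * den x₀ (m+1) + den x₀ m : ℤ) : ℝ) = _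
    push_cast; ring
  have hθm : theta x₀ m = r * p := theta_eq hx hirr m
  have hθm1 : theta x₀ (m + 1) = q * (p * t) := by
    rw [theta_eq hx hirr (m+1), prod_range_succ]
  have hθm2 : theta x₀ (m + 2) = (a * q + r) * (p * t * s) := by
    rw [theta_eq hx hirr (m+2), prod_range_succ, prod_range_succ, hq2]
  have hge : 0 ≤ (q - r * t) * p := by
    have h1 : r * t < r := by nlinarith
    have h2 : 0 ≤ q - r * t := by linarith
    exact mul_nonneg h2 hp.le
  have hsqrt : Real.sqrt (1 - 4 * theta x₀ m * theta x₀ (m + 1)) = (q - r * t) * p := by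
    rw [hθm, hθm1, show 1 - 4 * (r * p) * (q * (p * t)) = ((q - r * t) * p) ^ 2 by
      linear_combination (-(1 + p * (q + r * t))) * hD]
    exact Real.sqrt_sq hge
  rw [hθm2, hsqrt, hθm, hθm1]
  linear_combination (a * q + r) * p * hts
end
end
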